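/- Let n, a, b be finite types with n nonempty, and let ψ1 : n × a → ℂ and ψ2 : n × b → ℂ be unit vectors. Define ψ : (n × a) × (n × b) → ℂ by ψ ((x,α),(y,β)) = ψ1 (x,α) * ψ2 (y,β). Let Ẽ : Matrix ((n × a) × (n × b)) ((n × a) × (n × b)) ℂ be the operator with entries Ẽ ((x,α),(y,β)) ((x',α'),(y',β')) = if α = α' ∧ β = β' then (1/2) * ((if x = x' ∧ y = y' then 1 else 0) + (if x = y' ∧ y = x' then 1 else 0)) else 0 (the projector (1 + SWAP)/2 on the two n-registers, tensored with the identity on a and b). Then (star ψ ⬝ᵥ Ẽ.mulVec ψ) = 1 if and only if there exist vectors φ : n → ℂ, φ1 : a → ℂ, φ2 : b → ℂ such that ψ1 (x,α) = φ x * φ1 α for all x, α and ψ2 (y,β) = φ y * φ2 β for all y, β. [Corollary on quantum equality] -/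

import Mathlib

open Matrix
noncomputable section

lemma mulVecE {n a b : Type*} [Fintype n] [Fintype a] [Fintype b]
    [DecidableEq n] [DecidableEq a] [DecidableEq b]
    (ψ1 : n × a → ℂ) (ψ2 : n × b → ℂ) (p : (n × a) × (n × b)) :
    ((Matrix.of fun p q : (n × a) × (n × b) =>
          if p.1.2 = q.1.2 ∧ p.2.2 = q.2.2 then
            (1 / 2 : ℂ) * ((if p.1.1 = q.1.1 ∧ p.2.1 = q.2.1 then 1 else 0) +
              (if p.1.1 = q.2.1 ∧ p.2.1 = q.1.1 then 1 else 0))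
          else 0).mulVec (fun p : (n × a) × (n × b) => ψ1 p.1 * ψ2 p.2)) p
    = (1/2 : ℂ) * (ψ1 p.1 * ψ2 p.2 + ψ1 (p.2.1, p.1.2) * ψ2 (p.1.1, p.2.2)) := by
  obtain ⟨⟨x, α⟩, ⟨y, β⟩⟩ := p
  simp only [mulVec, dotProduct, of_apply]
  rw [Fintype.sum_prod_type]
  simp only [Fintype.sum_prod_type]
  simp [ite_and, mul_ite, ite_mul, mul_zero, zero_mul, mul_one, one_mul,
    mul_add, add_mul, Finset.sum_add_distrib, Finset.sum_ite_eq]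

-- product norm lemma
lemma dot_prod {n a b : Type*} [Fintype n] [Fintype a] [Fintype b]
    (f g : n × a → ℂ) (u v : n × b → ℂ) :
    (∑ p : (n × a) × (n × b), (starRingEnd ℂ) (f p.1 * u p.2) * (g p.1 * v p.2))
      = (star f ⬝ᵥ g) * (star u ⬝ᵥ v) := by
  rw [Fintype.sum_prod_type]
  simp only [dotProduct, Pi.star_apply, _root_.map_mul]
  rw [Finset.sum_mul_sum]
  congr 1; ext p; congr 1; ext q
  simp [RCLike.star_def]
  ring

theorem quantum_equality_corollary {n a b : Type*}
    [Fintype n] [Fintype a] [Fintype b]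
    [DecidableEq n] [DecidableEq a] [DecidableEq b] [Nonempty n]
    (ψ1 : n × a → ℂ) (ψ2 : n × b → ℂ)
    (hψ1 : star ψ1 ⬝ᵥ ψ1 = 1) (hψ2 : star ψ2 ⬝ᵥ ψ2 = 1) :
    (star (fun p : (n × a) × (n × b) => ψ1 p.1 * ψ2 p.2) ⬝ᵥ
        (Matrix.of fun p q : (n × a) × (n × b) =>
          if p.1.2 = q.1.2 ∧ p.2.2 = q.2.2 then
            (1 / 2 : ℂ) * ((if p.1.1 = q.1.1 ∧ p.2.1 = q.2.1 then 1 else 0) +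
              (if p.1.1 = q.2.1 ∧ p.2.1 = q.1.1 then 1 else 0))
          else 0).mulVec (fun p : (n × a) × (n × b) => ψ1 p.1 * ψ2 p.2)) = 1 ↔
      ∃ (φ : n → ℂ) (φ1 : a → ℂ) (φ2 : b → ℂ),
        (∀ x α, ψ1 (x, α) = φ x * φ1 α) ∧ (∀ y β, ψ2 (y, β) = φ y * φ2 β) := by
  set ψ : (n × a) × (n × b) → ℂ := fun p => ψ1 p.1 * ψ2 p.2 with hψ
  set Sψ : (n × a) × (n × b) → ℂ := fun p => ψ1 (p.2.1, p.1.2) * ψ2 (p.1.1, p.2.2) with hSψ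
  -- the swap equivalence
  let e : ((n × a) × (n × b)) ≃ ((n × a) × (n × b)) :=
    ⟨fun p => ((p.2.1, p.1.2), (p.1.1, p.2.2)), fun p => ((p.2.1, p.1.2), (p.1.1, p.2.2)),
      fun p => rfl, fun p => rfl⟩
  have hSe : ∀ p, Sψ p = ψ (e p) := fun p => rfl
  -- LHS = (1/2)(⟨ψ,ψ⟩ + ⟨ψ,Sψ⟩)
  have hψψ : (∑ p, (starRingEnd ℂ) (ψ p) * ψ p) = 1 := by
    have := dot_prod ψ1 ψ1 ψ2 ψ2
    rw [hψ1, hψ2] at this; simpa [hψ] using this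
  set s : ℂ := ∑ p, (starRingEnd ℂ) (ψ p) * Sψ p with hs
  have hLHS : (star ψ ⬝ᵥ
      (Matrix.of fun p q : (n × a) × (n × b) =>
          if p.1.2 = q.1.2 ∧ p.2.2 = q.2.2 then
            (1 / 2 : ℂ) * ((if p.1.1 = q.1.1 ∧ p.2.1 = q.2.1 then 1 else 0) +
              (if p.1.1 = q.2.1 ∧ p.2.1 = q.1.1 then 1 else 0))
          else 0).mulVec ψ) = (1/2) * (1 + s) := by
    unfold dotProduct
    have : ∀ p : (n × a) × (n × b),
        star ψ p * ((Matrix.of fun p q : (n × a) × (n × b) =>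
          if p.1.2 = q.1.2 ∧ p.2.2 = q.2.2 then
            (1 / 2 : ℂ) * ((if p.1.1 = q.1.1 ∧ p.2.1 = q.2.1 then 1 else 0) +
              (if p.1.1 = q.2.1 ∧ p.2.1 = q.1.1 then 1 else 0))
          else 0).mulVec ψ) p
        = (1/2) * ((starRingEnd ℂ) (ψ p) * ψ p + (starRingEnd ℂ) (ψ p) * Sψ p) := by
      intro p
      rw [hψ, mulVecE ψ1 ψ2 p]
      simp [RCLike.star_def]
      ring
    rw [Finset.sum_congr rfl (fun p _ => this p)]
    rw [← Finset.mul_sum, Finset.sum_add_distrib, hψψ, ← hs]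
  rw [hLHS]
  constructor
  · intro h
    have hs1 : s = 1 := by
      have : (1 : ℂ) + s = 2 := by
        field_simp at h; linear_combination h
      linear_combination this
    -- ⟨Sψ, Sψ⟩ = 1 by reindexing
    have hSS : (∑ p, (starRingEnd ℂ) (Sψ p) * Sψ p) = 1 := by
      rw [show (∑ p, (starRingEnd ℂ) (Sψ p) * Sψ p)
          = ∑ p, (starRingEnd ℂ) (ψ (e p)) * ψ (e p) from rfl,
        Equiv.sum_comp e (fun p => (starRingEnd ℂ) (ψ p) * ψ p)]
      exact hψψ
    -- ⟨Sψ, ψ⟩ = s by reindexing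
    have hSs : (∑ p, (starRingEnd ℂ) (Sψ p) * ψ p) = s := by
      rw [hs, ← Equiv.sum_comp e (fun p => (starRingEnd ℂ) (ψ p) * Sψ p)]
      exact Finset.sum_congr rfl fun p _ => rfl
    -- ‖ψ - Sψ‖² = 0
    have hzero : (∑ p, (starRingEnd ℂ) (ψ p - Sψ p) * (ψ p - Sψ p)) = 0 := by
      have expand : ∀ p, (starRingEnd ℂ) (ψ p - Sψ p) * (ψ p - Sψ p)
          = (starRingEnd ℂ) (ψ p) * ψ p - (starRingEnd ℂ) (ψ p) * Sψ p
            - (starRingEnd ℂ) (Sψ p) * ψ p + (starRingEnd ℂ) (Sψ p) * Sψ p := by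
        intro p; simp [map_sub]; ring
      rw [Finset.sum_congr rfl (fun p _ => expand p)]
      simp only [Finset.sum_add_distrib, Finset.sum_sub_distrib]
      rw [hψψ, ← hs, hs1, hSs, hs1, hSS]
      ring
    have hpt : ∀ p : (n × a) × (n × b), ψ p = Sψ p := by
      have h2 : (∑ p, (Complex.normSq (ψ p - Sψ p) : ℂ)) = 0 := by
        rw [← hzero]
        exact Finset.sum_congr rfl fun p _ => by
          rw [Complex.normSq_eq_conj_mul_self]
      have h3 : (∑ p, Complex.normSq (ψ p - Sψ p)) = 0 := by
        exact_mod_cast h2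
      intro p
      have := (Finset.sum_eq_zero_iff_of_nonneg
        (fun p _ => Complex.normSq_nonneg (ψ p - Sψ p))).mp h3 p (Finset.mem_univ p)
      exact sub_eq_zero.mp (Complex.normSq_eq_zero.mp this)
    have feq : ∀ x α y β, ψ1 (x, α) * ψ2 (y, β) = ψ1 (y, α) * ψ2 (x, β) :=
      fun x α y β => hpt ((x, α), (y, β))
    have hne1 : ∃ q : n × a, ψ1 q ≠ 0 := by
      by_contra hc; push_neg at hc
      rw [dotProduct] at hψ1
      simp [hc] at hψ1
    have hne2 : ∃ q : n × b, ψ2 q ≠ 0 := by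
      by_contra hc; push_neg at hc
      rw [dotProduct] at hψ2
      simp [hc] at hψ2
    obtain ⟨⟨x1, α1⟩, h1ne⟩ := hne1
    obtain ⟨⟨y0, β0⟩, h2ne⟩ := hne2
    refine ⟨fun x => ψ2 (x, β0) / ψ2 (y0, β0), fun α => ψ1 (y0, α), fun β => ψ2 (y0, β),
      fun x α => ?_, fun y β => ?_⟩
    · have := feq x α y0 β0
      field_simp
      linear_combination this
    · have hy0 : ψ1 (y0, α1) ≠ 0 := by
        intro h0
        have := feq x1 α1 y0 β0
        rw [h0, zero_mul] at this
        exact mul_ne_zero h1ne h2ne this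
      have key := feq y0 α1 y β
      have hfac : ψ1 (y, α1) = ψ2 (y, β0) / ψ2 (y0, β0) * ψ1 (y0, α1) := by
        have := feq y α1 y0 β0
        field_simp
        linear_combination this
      rw [hfac] at key
      field_simp at key ⊢
      apply mul_left_cancel₀ hy0
      linear_combination ψ1 (y0, α1) * key
  · rintro ⟨φ, φ1, φ2, h1, h2⟩
    have hSeq : ∀ p, Sψ p = ψ p := by
      rintro ⟨⟨x, α⟩, ⟨y, β⟩⟩
      simp only [hψ, hSψ, h1, h2]
      ring
    have : s = 1 := by
      rw [hs, Finset.sum_congr rfl fun p _ => by rw [hSeq p]]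
      exact hψψ
    rw [this]; norm_num
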